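/- Let n ≥ 0 be an integer, let 𝔞₁,…,𝔞_{n+1} ∈ (0,1] be real numbers, and let r ≥ 2 be an integer. Define W_r(z) := ∑_{k≥0} (∏_{j=1}^{n+1} [𝔞_j + 1/r]_k / [1/r]_{k+1}) · z^{k+1/r} for z ∈ (0,1). Then this series converges for every z ∈ (0,1), W_r(z) → 0 as z → 0⁺, and W_r solves the inhomogeneous hypergeometric equation (L W_r)(z) = z^{1/r} for all z ∈ (0,1). -/

import Mathlib

open scoped BigOperators

/-- The Euler operator `D = z · d/dz` acting on functions of a real variable. -/
noncomputable def Dop (f : ℝ → ℝ) : ℝ → ℝ := fun z => z * deriv f z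

/-- The hypergeometric differential operator
`L = D^{n+1} − z·∏_{j=1}^{n+1}(D + 𝔞_j)` attached to indices `(𝔞₁,…,𝔞_{n+1}; 1,…,1)`. -/
noncomputable def hgL (n : ℕ) (a : Fin (n + 1) → ℝ) (f : ℝ → ℝ) : ℝ → ℝ := fun z =>
  (Dop^[n + 1] f) z -
    z * ((List.ofFn fun j : Fin (n + 1) =>
      (fun g : ℝ → ℝ => fun w => Dop g w + a j * g w)).foldr (· ∘ ·) id f z)

/-- `W_r(z) = ∑_{k≥0} (∏_{j=1}^{n+1} [𝔞_j + 1/r]_k / [1/r]_{k+1}) · z^{k+1/r}`. -/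
noncomputable def Wr (n : ℕ) (a : Fin (n + 1) → ℝ) (r : ℕ) (z : ℝ) : ℝ :=
  ∑' k : ℕ,
    (∏ j : Fin (n + 1),
      (ascPochhammer ℝ k).eval (a j + 1 / (r : ℝ)) /
        (ascPochhammer ℝ (k + 1)).eval (1 / (r : ℝ))) *
      z ^ ((k : ℝ) + 1 / (r : ℝ))

open Set Filter Real

def PolyBnd (b : ℕ → ℝ) : Prop := ∃ C : ℝ, ∃ M : ℕ, ∀ k : ℕ, |b k| ≤ C * ((k : ℝ) + 1) ^ M

lemma aux_summable_pow_geom (M : ℕ) {z : ℝ} (h0 : 0 < z) (h1 : z < 1) :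
    Summable fun k : ℕ => ((k : ℝ) + 1) ^ M * z ^ k := by
  have h := summable_pow_mul_geometric_of_norm_lt_one (R := ℝ) M
    (r := z) (by rw [Real.norm_eq_abs, abs_of_pos h0]; exact h1)
  have h2 : Summable fun k : ℕ => ((k : ℝ) + 1) ^ M * z ^ (k + 1) := by
    have := (summable_nat_add_iff (f := fun n : ℕ => (n : ℝ) ^ M * z ^ n) 1).mpr h
    simpa [Nat.cast_add] using this
  have h3 := h2.mul_left z⁻¹
  refine h3.congr fun k => ?_
  field_simp [pow_succ]
  ring

lemma summable_ser {s : ℝ} (hs0 : 0 < s) {b : ℕ → ℝ} (hb : PolyBnd b) {z : ℝ}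
    (hz : z ∈ Set.Ioo (0 : ℝ) 1) : Summable fun k : ℕ => b k * z ^ ((k : ℝ) + s) := by
  obtain ⟨C, M, hC⟩ := hb
  refine Summable.of_norm ?_
  have key : ∀ k : ℕ, ‖b k * z ^ ((k : ℝ) + s)‖ ≤ (C * z ^ s) * (((k : ℝ) + 1) ^ M * z ^ k) := by
    intro k
    have hzpos := hz.1
    have : z ^ ((k : ℝ) + s) = z ^ k * z ^ s := by
      rw [Real.rpow_add hzpos, Real.rpow_natCast]
    rw [Real.norm_eq_abs, abs_mul, this, abs_of_pos (show (0:ℝ) < z ^ k * z ^ s by positivity)]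
    calc |b k| * (z ^ k * z ^ s) ≤ (C * ((k : ℝ) + 1) ^ M) * (z ^ k * z ^ s) := by
          apply mul_le_mul_of_nonneg_right (hC k); positivity
      _ = (C * z ^ s) * (((k : ℝ) + 1) ^ M * z ^ k) := by ring
  exact Summable.of_nonneg_of_le (fun k => norm_nonneg _) key
    (((aux_summable_pow_geom M hz.1 hz.2)).mul_left _)

lemma hasDerivAt_ser {s : ℝ} (hs0 : 0 < s) (hs1 : s ≤ 1) {b : ℕ → ℝ} (hb : PolyBnd b)
    {z : ℝ} (hz : z ∈ Set.Ioo (0 : ℝ) 1) :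
    HasDerivAt (fun w => ∑' k : ℕ, b k * w ^ ((k : ℝ) + s))
      (∑' k : ℕ, b k * ((k : ℝ) + s) * z ^ ((k : ℝ) + s - 1)) z := by
  obtain ⟨C, M, hC⟩ := hb
  have hC0 : 0 ≤ C := by
    have := (abs_nonneg (b 0)).trans (hC 0)
    nlinarith [pow_pos (show (0:ℝ) < (0:ℕ) + 1 by norm_num) M]
  -- coefficient bound for derivative series
  have hb' : ∀ k : ℕ, |b k * ((k : ℝ) + s)| ≤ C * ((k : ℝ) + 1) ^ (M + 1) := by
    intro k
    have h1 : (0:ℝ) < (k : ℝ) + s := by positivity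
    rw [abs_mul, abs_of_pos h1]
    calc |b k| * ((k : ℝ) + s) ≤ (C * ((k : ℝ) + 1) ^ M) * ((k : ℝ) + 1) := by
          apply mul_le_mul (hC k) (by linarith) (le_of_lt h1) (by positivity)
      _ = C * ((k : ℝ) + 1) ^ (M + 1) := by rw [pow_succ]; ring
  apply hasDerivAt_of_tendstoLocallyUniformlyOn (l := Filter.atTop) (f := fun N w =>
      ∑ k ∈ Finset.range N, b k * w ^ ((k : ℝ) + s))
    (f' := fun N w => ∑ k ∈ Finset.range N, b k * ((k : ℝ) + s) * w ^ ((k : ℝ) + s - 1))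
    isOpen_Ioo ?_ ?_ ?_ hz
  · -- locally uniform convergence of derivatives
    rw [tendstoLocallyUniformlyOn_iff_forall_isCompact isOpen_Ioo]
    intro K hK hKc
    rcases K.eq_empty_or_nonempty with hKe | hKne
    · simpa [hKe] using tendstoUniformlyOn_empty
    obtain ⟨δ, hδK, hδle⟩ := hKc.exists_isLeast hKne
    obtain ⟨t, htK, htge⟩ := hKc.exists_isGreatest hKne
    have hδ : δ ∈ Set.Ioo (0:ℝ) 1 := hK hδK
    have ht : t ∈ Set.Ioo (0:ℝ) 1 := hK htK
    apply tendstoUniformlyOn_tsum_nat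
      (u := fun k : ℕ => (C * δ ^ (s - 1)) * (((k : ℝ) + 1) ^ (M + 1) * t ^ k))
      (((aux_summable_pow_geom (M+1) ht.1 ht.2).mul_left _))
    intro k x hx
    have hx0 : 0 < x := (hK hx).1
    have hxt : x ≤ t := htge hx
    have hδx : δ ≤ x := hδle hx
    have hsplit : x ^ ((k : ℝ) + s - 1) = x ^ (k : ℕ) * x ^ (s - 1) := by
      rw [← Real.rpow_natCast x k, ← Real.rpow_add hx0]; ring_nf
    have h1 : x ^ (k:ℕ) ≤ t ^ k := pow_le_pow_left₀ hx0.le hxt k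
    have h2 : x ^ (s - 1) ≤ δ ^ (s - 1) :=
      Real.rpow_le_rpow_of_nonpos hδ.1 hδx (by linarith)
    rw [Real.norm_eq_abs, abs_mul, hsplit,
      abs_of_pos (mul_pos (pow_pos hx0 k) (Real.rpow_pos_of_pos hx0 _))]
    calc |b k * ((k : ℝ) + s)| * (x ^ (k:ℕ) * x ^ (s - 1))
        ≤ (C * ((k : ℝ) + 1) ^ (M + 1)) * (t ^ k * δ ^ (s - 1)) := by
          apply mul_le_mul (hb' k) ?_
            (mul_nonneg (pow_nonneg hx0.le _) (Real.rpow_pos_of_pos hx0 _).le)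
            (by positivity)
          apply mul_le_mul h1 h2 (Real.rpow_pos_of_pos hx0 _).le (pow_nonneg ht.1.le _)
      _ = (C * δ ^ (s - 1)) * (((k : ℝ) + 1) ^ (M + 1) * t ^ k) := by ring
  · -- each partial sum has the right derivative
    filter_upwards with N x hx
    apply HasDerivAt.fun_sum
    intro k _
    have h := (Real.hasDerivAt_rpow_const (x := x) (p := (k : ℝ) + s)
      (Or.inl hx.1.ne')).const_mul (b k)
    exact h.congr_deriv (by ring)
  · -- pointwise convergence
    intro x hx
    exact (summable_ser hs0 ⟨C, M, hC⟩ hx).hasSum.tendsto_sum_nat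

noncomputable def ser (s : ℝ) (b : ℕ → ℝ) : ℝ → ℝ := fun z => ∑' k : ℕ, b k * z ^ ((k : ℝ) + s)

lemma PolyBnd.congr {b c : ℕ → ℝ} (h : ∀ k, b k = c k) (hb : PolyBnd b) : PolyBnd c := by
  obtain ⟨C, M, hC⟩ := hb; exact ⟨C, M, fun k => (h k) ▸ hC k⟩

lemma PolyBnd.mul_add {b : ℕ → ℝ} (hb : PolyBnd b) (c : ℝ) :
    PolyBnd fun k => b k * ((k : ℝ) + c) := by
  obtain ⟨C, M, hC⟩ := hb
  refine ⟨C * (1 + |c|), M + 1, fun k => ?_⟩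
  have h1 : |(k : ℝ) + c| ≤ ((k : ℝ) + 1) * (1 + |c|) := by
    have hk : |(k : ℝ)| = (k : ℝ) := abs_of_nonneg (Nat.cast_nonneg k)
    have : |(k : ℝ) + c| ≤ (k : ℝ) + |c| := by
      calc |(k:ℝ)+c| ≤ |(k:ℝ)|+|c| := abs_add_le _ _
        _ = (k:ℝ)+|c| := by rw [hk]
    nlinarith [abs_nonneg c, Nat.cast_nonneg (α := ℝ) k]
  have h2 : (0:ℝ) ≤ C * ((k:ℝ)+1)^M := le_trans (abs_nonneg _) (hC k)
  calc |b k * ((k:ℝ) + c)| = |b k| * |(k:ℝ) + c| := abs_mul _ _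
    _ ≤ (C * ((k:ℝ)+1)^M) * (((k : ℝ) + 1) * (1 + |c|)) := by
        apply mul_le_mul (hC k) h1 (abs_nonneg _) h2
    _ = C * (1 + |c|) * ((k:ℝ)+1)^(M+1) := by rw [pow_succ]; ring

lemma PolyBnd.const_mul {b : ℕ → ℝ} (hb : PolyBnd b) (c : ℝ) :
    PolyBnd fun k => c * b k := by
  obtain ⟨C, M, hC⟩ := hb
  refine ⟨|c| * C, M, fun k => ?_⟩
  rw [abs_mul, mul_assoc]
  exact mul_le_mul_of_nonneg_left (hC k) (abs_nonneg c)

lemma Dop_congr {f g : ℝ → ℝ} {z : ℝ} (h : f =ᶠ[nhds z] g) : Dop f z = Dop g z := by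
  unfold Dop; rw [h.deriv_eq]

lemma step_D {s : ℝ} (hs0 : 0 < s) (hs1 : s ≤ 1) {b : ℕ → ℝ} (hb : PolyBnd b)
    {g : ℝ → ℝ} (hg : Set.EqOn g (ser s b) (Set.Ioo 0 1)) :
    Set.EqOn (Dop g) (ser s fun k => b k * ((k : ℝ) + s)) (Set.Ioo 0 1) := by
  intro z hz
  have heq : g =ᶠ[nhds z] ser s b := hg.eventuallyEq_of_mem (isOpen_Ioo.mem_nhds hz)
  rw [Dop_congr heq]
  show z * deriv (ser s b) z = _
  unfold ser
  rw [(hasDerivAt_ser hs0 hs1 hb hz).deriv, ← tsum_mul_left]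
  apply tsum_congr; intro k
  have : z * z ^ ((k:ℝ) + s - 1) = z ^ ((k:ℝ) + s) := by
    calc z * z ^ ((k:ℝ) + s - 1) = z ^ (1:ℝ) * z ^ ((k:ℝ) + s - 1) := by rw [Real.rpow_one]
      _ = z ^ (1 + ((k:ℝ) + s - 1)) := (Real.rpow_add hz.1 _ _).symm
      _ = z ^ ((k:ℝ) + s) := by ring_nf
  calc z * (b k * ((k:ℝ) + s) * z ^ ((k:ℝ) + s - 1))
      = b k * ((k:ℝ) + s) * (z * z ^ ((k:ℝ) + s - 1)) := by ring
    _ = b k * ((k:ℝ) + s) * z ^ ((k:ℝ) + s) := by rw [this]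

lemma PolyBnd.mul_pow {s : ℝ} {b : ℕ → ℝ} (hb : PolyBnd b) (m : ℕ) :
    PolyBnd fun k => b k * ((k : ℝ) + s) ^ m := by
  induction m with
  | zero => exact hb.congr (by intro k; simp)
  | succ m ih => exact (ih.mul_add s).congr (by intro k; rw [pow_succ]; ring)

lemma iter_D {s : ℝ} (hs0 : 0 < s) (hs1 : s ≤ 1) {b : ℕ → ℝ} (hb : PolyBnd b)
    {g : ℝ → ℝ} (hg : Set.EqOn g (ser s b) (Set.Ioo 0 1)) (m : ℕ) :
    Set.EqOn (Dop^[m] g) (ser s fun k => b k * ((k : ℝ) + s) ^ m) (Set.Ioo 0 1) := by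
  induction m with
  | zero => simpa using hg
  | succ m ih =>
      rw [Function.iterate_succ_apply']
      have := step_D hs0 hs1 (hb.mul_pow m) ih
      intro z hz
      rw [this hz]
      unfold ser
      apply tsum_congr; intro k
      simp only [pow_succ]; ring

lemma step_T {s : ℝ} (hs0 : 0 < s) (hs1 : s ≤ 1) (aj : ℝ) {b : ℕ → ℝ} (hb : PolyBnd b)
    {g : ℝ → ℝ} (hg : Set.EqOn g (ser s b) (Set.Ioo 0 1)) :
    Set.EqOn (fun w => Dop g w + aj * g w)
      (ser s fun k => b k * ((k : ℝ) + s + aj)) (Set.Ioo 0 1) := by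
  intro z hz
  have h1 := step_D hs0 hs1 hb hg hz
  simp only at h1 ⊢
  rw [h1, hg hz]
  unfold ser
  rw [← tsum_mul_left]
  rw [← Summable.tsum_add (summable_ser hs0 (hb.mul_add s) hz)
    (((summable_ser hs0 (hb.const_mul aj) hz)).congr (fun k => by ring))]
  apply tsum_congr; intro k
  ring

lemma PolyBnd.mul_list_prod {s : ℝ} {b : ℕ → ℝ} (hb : PolyBnd b) (l : List ℝ) :
    PolyBnd fun k => b k * (l.map fun x => (k : ℝ) + s + x).prod := by
  induction l with
  | nil => exact hb.congr (by intro k; simp)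
  | cons x tl ih =>
      exact (ih.mul_add (s + x)).congr (by intro k; simp [List.prod_cons]; ring)

lemma foldr_T {s : ℝ} (hs0 : 0 < s) (hs1 : s ≤ 1) (l : List ℝ) {b : ℕ → ℝ} (hb : PolyBnd b)
    {g : ℝ → ℝ} (hg : Set.EqOn g (ser s b) (Set.Ioo 0 1)) :
    Set.EqOn (((l.map fun aj => fun g : ℝ → ℝ => fun w => Dop g w + aj * g w).foldr
        (· ∘ ·) id) g)
      (ser s fun k => b k * (l.map fun x => (k : ℝ) + s + x).prod) (Set.Ioo 0 1) := by
  induction l with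
  | nil => simpa using hg
  | cons x tl ih =>
      simp only [List.map_cons, List.foldr_cons, Function.comp_apply]
      have h2 := step_T hs0 hs1 x (hb.mul_list_prod (s := s) tl) ih
      intro z hz
      rw [h2 hz]
      unfold ser
      apply tsum_congr; intro k
      simp only [List.prod_cons]; ring

lemma asc_mono (k : ℕ) {x y : ℝ} (hx : 0 < x) (hxy : x ≤ y) :
    (ascPochhammer ℝ k).eval x ≤ (ascPochhammer ℝ k).eval y := by
  induction k with
  | zero => simp
  | succ k ih =>
      rw [ascPochhammer_succ_eval, ascPochhammer_succ_eval]
      have h1 : (0:ℝ) < (ascPochhammer ℝ k).eval x := ascPochhammer_pos k x hx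
      have h2 : (0:ℝ) < x + k := by positivity
      apply mul_le_mul ih (by linarith) (le_of_lt h2) ((h1.trans_le ih).le)

lemma asc_succ_left_eval (k : ℕ) (s : ℝ) :
    (ascPochhammer ℝ (k + 1)).eval s = s * (ascPochhammer ℝ k).eval (s + 1) := by
  rw [ascPochhammer_succ_left]
  simp [Polynomial.eval_comp]

lemma p_pos {s a : ℝ} (hs0 : 0 < s) (ha0 : 0 < a) (k : ℕ) :
    0 < (ascPochhammer ℝ k).eval (a + s) / (ascPochhammer ℝ (k + 1)).eval s :=
  div_pos (ascPochhammer_pos k _ (by linarith)) (ascPochhammer_pos (k+1) _ hs0)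

lemma p_le {s a : ℝ} (hs0 : 0 < s) (ha0 : 0 < a) (ha1 : a ≤ 1) (k : ℕ) :
    (ascPochhammer ℝ k).eval (a + s) / (ascPochhammer ℝ (k + 1)).eval s ≤ 1 / s := by
  have hden : (0:ℝ) < (ascPochhammer ℝ (k+1)).eval s := ascPochhammer_pos (k+1) _ hs0
  rw [div_le_div_iff₀ hden hs0, asc_succ_left_eval, one_mul]
  have h1 : (ascPochhammer ℝ k).eval (a + s) ≤ (ascPochhammer ℝ k).eval (s + 1) :=
    asc_mono k (by linarith) (by linarith)
  nlinarith [ascPochhammer_pos k (s + 1) (by linarith), h1]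

lemma p_rec {s a : ℝ} (hs0 : 0 < s) (ha0 : 0 < a) (k : ℕ) :
    (ascPochhammer ℝ (k + 1)).eval (a + s) / (ascPochhammer ℝ (k + 1 + 1)).eval s
      * (((k : ℝ) + 1) + s)
    = (ascPochhammer ℝ k).eval (a + s) / (ascPochhammer ℝ (k + 1)).eval s
      * ((k : ℝ) + s + a) := by
  have hden : (0:ℝ) < (ascPochhammer ℝ (k+1)).eval s := ascPochhammer_pos (k+1) _ hs0
  have hd2 : (0:ℝ) < s + ((k:ℝ) + 1) := by positivity
  rw [ascPochhammer_succ_eval ((k:ℕ)+1) s, ascPochhammer_succ_eval k (a + s)]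
  push_cast
  field_simp
  ring

lemma PolyBnd.shift {d : ℕ → ℝ} (hd : PolyBnd d) :
    PolyBnd fun k => Nat.rec (motive := fun _ => ℝ) 0 (fun m _ => d m) k := by
  obtain ⟨C, M, hC⟩ := hd
  have hC0 : 0 ≤ C := by
    have := (abs_nonneg (d 0)).trans (hC 0)
    simpa using this
  refine ⟨C, M, fun k => ?_⟩
  cases k with
  | zero => simpa using hC0
  | succ m =>
      refine (hC m).trans ?_
      have : ((m:ℝ) + 1) ^ M ≤ ((m:ℝ) + 1 + 1) ^ M :=
        pow_le_pow_left₀ (by positivity) (by linarith) M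
      have h2 : ((m + 1 : ℕ) : ℝ) + 1 = (m:ℝ) + 1 + 1 := by push_cast; ring
      rw [h2]
      exact mul_le_mul_of_nonneg_left this hC0

lemma rpow_succ_aux {z : ℝ} (hz : 0 < z) (c : ℝ) : z * z ^ c = z ^ (1 + c) := by
  rw [Real.rpow_add hz, Real.rpow_one]

theorem stmt0 (n : ℕ) (a : Fin (n + 1) → ℝ) (ha : ∀ j, a j ∈ Set.Ioc (0 : ℝ) 1)
    (r : ℕ) (hr : 2 ≤ r) :
    (∀ z ∈ Set.Ioo (0 : ℝ) 1,
      Summable fun k : ℕ =>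
        (∏ j : Fin (n + 1),
          (ascPochhammer ℝ k).eval (a j + 1 / (r : ℝ)) /
            (ascPochhammer ℝ (k + 1)).eval (1 / (r : ℝ))) *
          z ^ ((k : ℝ) + 1 / (r : ℝ))) ∧
    Filter.Tendsto (Wr n a r) (nhdsWithin 0 (Set.Ioi 0)) (nhds 0) ∧
    ∀ z ∈ Set.Ioo (0 : ℝ) 1, hgL n a (Wr n a r) z = z ^ (1 / (r : ℝ)) := by
  have hr0 : (0:ℝ) < (r:ℝ) := by exact_mod_cast (by omega : 0 < r)
  set s : ℝ := 1 / (r : ℝ) with hs_def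
  have hs0 : 0 < s := by positivity
  have hs1 : s ≤ 1 := by
    rw [hs_def, div_le_one hr0]
    exact_mod_cast (by omega : 1 ≤ r)
  set c : ℕ → ℝ := fun k => ∏ j : Fin (n+1),
    (ascPochhammer ℝ k).eval (a j + s) / (ascPochhammer ℝ (k+1)).eval s with hc_def
  have hcpos : ∀ k, 0 < c k := fun k =>
    Finset.prod_pos fun j _ => p_pos hs0 (ha j).1 k
  have hcle : ∀ k, c k ≤ (1/s)^(n+1) := by
    intro k
    calc c k ≤ ∏ _j : Fin (n+1), (1/s) :=
          Finset.prod_le_prod (fun j _ => (p_pos hs0 (ha j).1 k).le)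
            (fun j _ => p_le hs0 (ha j).1 (ha j).2 k)
      _ = (1/s)^(n+1) := by rw [Finset.prod_const, Finset.card_univ, Fintype.card_fin]
  have hPB : PolyBnd c := by
    refine ⟨(1/s)^(n+1), 0, fun k => ?_⟩
    rw [pow_zero, mul_one, abs_of_pos (hcpos k)]
    exact hcle k
  have hWr : Wr n a r = ser s c := rfl
  refine ⟨fun z hz => summable_ser hs0 hPB hz, ?_, ?_⟩
  · -- tendsto
    have hev : ∀ᶠ z in nhdsWithin (0:ℝ) (Set.Ioi 0), z ∈ Set.Ioo (0:ℝ) (1/2) := by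
      have h1 : ∀ᶠ z in nhdsWithin (0:ℝ) (Set.Ioi 0), z ∈ Set.Ioi (0:ℝ) :=
        eventually_mem_nhdsWithin
      have h2 : ∀ᶠ z in nhdsWithin (0:ℝ) (Set.Ioi 0), z < 1/2 :=
        mem_nhdsWithin_of_mem_nhds (Iio_mem_nhds (by norm_num))
      filter_upwards [h1, h2] with z hz1 hz2
      exact ⟨hz1, hz2⟩
    have hnonneg : ∀ z ∈ Set.Ioo (0:ℝ) (1/2), 0 ≤ Wr n a r z := by
      intro z hz
      rw [hWr]
      exact tsum_nonneg fun k => mul_nonneg (hcpos k).le (Real.rpow_nonneg hz.1.le _)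
    have hub : ∀ z ∈ Set.Ioo (0:ℝ) (1/2), Wr n a r z ≤ (2 * (1/s)^(n+1)) * z ^ s := by
      intro z hz
      have hz1 : z ∈ Set.Ioo (0:ℝ) 1 := ⟨hz.1, by linarith [hz.2]⟩
      have hgeom : Summable fun k : ℕ => ((1/s)^(n+1) * z ^ s) * z ^ k :=
        (summable_geometric_of_lt_one hz.1.le hz1.2).mul_left _
      have hle : ∀ k : ℕ, c k * z ^ ((k:ℝ) + s) ≤ ((1/s)^(n+1) * z ^ s) * z ^ k := by
        intro k
        have hzs : z ^ ((k:ℝ) + s) = z ^ (k:ℕ) * z ^ s := by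
          rw [Real.rpow_add hz.1, Real.rpow_natCast]
        rw [hzs]
        calc c k * (z ^ (k:ℕ) * z ^ s) ≤ (1/s)^(n+1) * (z ^ (k:ℕ) * z ^ s) := by
              apply mul_le_mul_of_nonneg_right (hcle k)
              exact mul_nonneg (pow_nonneg hz.1.le _) (Real.rpow_nonneg hz.1.le _)
          _ = ((1/s)^(n+1) * z ^ s) * z ^ k := by ring
      have hsum : Wr n a r z ≤ ∑' k : ℕ, ((1/s)^(n+1) * z ^ s) * z ^ k := by
        rw [hWr]
        exact Summable.tsum_le_tsum hle (summable_ser hs0 hPB hz1) hgeom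
      have hval : ∑' k : ℕ, ((1/s)^(n+1) * z ^ s) * z ^ k
          = ((1/s)^(n+1) * z ^ s) * (1 - z)⁻¹ := by
        rw [tsum_mul_left, tsum_geometric_of_lt_one hz.1.le hz1.2]
      have hinv : (1 - z)⁻¹ ≤ 2 := by
        rw [inv_le_comm₀ (by linarith [hz.2]) (by norm_num)]
        linarith [hz.2]
      calc Wr n a r z ≤ ((1/s)^(n+1) * z ^ s) * (1 - z)⁻¹ := by rw [← hval]; exact hsum
        _ ≤ ((1/s)^(n+1) * z ^ s) * 2 := by
            apply mul_le_mul_of_nonneg_left hinv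
            exact mul_nonneg (pow_nonneg (by positivity) _) (Real.rpow_nonneg hz.1.le _)
        _ = (2 * (1/s)^(n+1)) * z ^ s := by ring
    have htend : Filter.Tendsto (fun z : ℝ => (2 * (1/s)^(n+1)) * z ^ s)
        (nhdsWithin (0:ℝ) (Set.Ioi 0)) (nhds 0) := by
      have h1 : ContinuousAt (fun z : ℝ => z ^ s) 0 :=
        Real.continuousAt_rpow_const 0 s (Or.inr hs0.le)
      have h2 : Filter.Tendsto (fun z : ℝ => z ^ s) (nhds 0) (nhds 0) := by
        have := h1.tendsto
        rwa [Real.zero_rpow hs0.ne'] at this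
      have h3 := (h2.const_mul (2 * (1/s)^(n+1))).mono_left (nhdsWithin_le_nhds (s := Set.Ioi (0:ℝ)))
      simpa using h3
    apply squeeze_zero' (by filter_upwards [hev] with z hz using hnonneg z hz)
      (by filter_upwards [hev] with z hz using hub z hz) htend
  · -- the differential equation
    intro z hz
    have hEq : Set.EqOn (Wr n a r) (ser s c) (Set.Ioo 0 1) := fun w _ => congrFun hWr w
    have hiter := iter_D hs0 hs1 hPB hEq (n+1) hz
    have hlist : (List.ofFn fun j : Fin (n+1) =>
        (fun g : ℝ → ℝ => fun w => Dop g w + a j * g w))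
        = (List.ofFn a).map (fun aj => fun g : ℝ → ℝ => fun w => Dop g w + aj * g w) := by
      rw [List.map_ofFn]; rfl
    have hfold := foldr_T hs0 hs1 (List.ofFn a) hPB hEq hz
    have hq : ∀ k : ℕ, ((List.ofFn a).map fun x => (k:ℝ) + s + x).prod
        = ∏ j : Fin (n+1), ((k:ℝ) + s + a j) := by
      intro k
      rw [List.map_ofFn, List.prod_ofFn]
      rfl
    set d : ℕ → ℝ := fun k => c k * ∏ j : Fin (n+1), ((k:ℝ) + s + a j) with hd_def
    have hPBd : PolyBnd d :=
      (hPB.mul_list_prod (s := s) (List.ofFn a)).congr (fun k => by rw [hq k])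
    set e : ℕ → ℝ := fun k => Nat.rec (motive := fun _ => ℝ) 0 (fun m _ => d m) k with he_def
    have hPBe : PolyBnd e := hPBd.shift
    have hfold' : ((List.ofFn a).map fun aj =>
        (fun g : ℝ → ℝ => fun w => Dop g w + aj * g w)).foldr (· ∘ ·) id (Wr n a r) z
        = ser s d z := by
      rw [hfold]
      unfold ser
      exact tsum_congr fun k => by simp only [hq k]; rfl
    have hstepA : z * ser s d z = ser s e z := by
      have hsum_e : Summable (fun k => e k * z ^ ((k:ℝ)+s)) := summable_ser hs0 hPBe hz
      unfold ser
      rw [← tsum_mul_left, Summable.tsum_eq_zero_add hsum_e]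
      have he0 : e 0 * z ^ (((0:ℕ):ℝ) + s) = 0 := by
        show (0:ℝ) * _ = 0
        ring
      rw [he0, zero_add]
      apply tsum_congr
      intro k
      show z * (d k * z ^ ((k:ℝ) + s)) = d k * z ^ (((k+1:ℕ):ℝ) + s)
      rw [show (((k+1:ℕ):ℝ) + s) = 1 + ((k:ℝ) + s) by push_cast; ring,
        ← rpow_succ_aux hz.1]
      ring
    have hrec : ∀ m : ℕ, c (m+1) * (((m:ℝ)+1)+s)^(n+1) = d m := by
      intro m
      calc c (m+1) * (((m:ℝ)+1)+s)^(n+1)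
          = ∏ j : Fin (n+1), ((ascPochhammer ℝ (m+1)).eval (a j + s)
              / (ascPochhammer ℝ (m+1+1)).eval s * (((m:ℝ)+1)+s)) := by
            rw [Finset.prod_mul_distrib, Finset.prod_const, Finset.card_univ,
              Fintype.card_fin]
        _ = ∏ j : Fin (n+1), ((ascPochhammer ℝ m).eval (a j + s)
              / (ascPochhammer ℝ (m+1)).eval s * ((m:ℝ) + s + a j)) :=
            Finset.prod_congr rfl fun j _ => p_rec hs0 (ha j).1 m
        _ = d m := by rw [Finset.prod_mul_distrib]
    have hterm : ∀ k : ℕ, (c k * ((k:ℝ)+s)^(n+1) - e k) * z ^ ((k:ℝ)+s)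
        = if k = 0 then z ^ s else 0 := by
      intro k
      cases k with
      | zero =>
          have hc0 : c 0 = (1/s)^(n+1) := by
            rw [hc_def]
            simp only [zero_add, ascPochhammer_zero, ascPochhammer_one, Polynomial.eval_one,
              Polynomial.eval_X]
            rw [Finset.prod_const, Finset.card_univ, Fintype.card_fin]
          have he0 : e 0 = 0 := rfl
          rw [he0, hc0]
          simp only [Nat.cast_zero, zero_add, if_pos rfl, sub_zero]
          rw [← mul_pow, one_div, inv_mul_cancel₀ hs0.ne', one_pow, one_mul]
          simp
      | succ m =>
          have h1 : c (m+1) * ((((m+1):ℕ):ℝ)+s)^(n+1) - e (m+1) = 0 := by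
            have he : e (m+1) = d m := rfl
            rw [he, show ((((m+1):ℕ):ℝ)+s) = ((m:ℝ)+1)+s by push_cast; ring,
              hrec m, sub_self]
          rw [h1, zero_mul, if_neg (Nat.succ_ne_zero m)]
    have hmain : ser s (fun k => c k * ((k:ℝ)+s)^(n+1)) z - ser s e z = z ^ s := by
      unfold ser
      rw [← Summable.tsum_sub (summable_ser hs0 (hPB.mul_pow (n+1)) hz)
        (summable_ser hs0 hPBe hz)]
      have : ∀ k : ℕ, c k * ((k:ℝ)+s)^(n+1) * z ^ ((k:ℝ)+s) - e k * z ^ ((k:ℝ)+s)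
          = if k = 0 then z ^ s else 0 := by
        intro k
        rw [← sub_mul]
        exact hterm k
      rw [tsum_congr this]; exact tsum_ite_eq 0 (fun _ => z ^ s)
    show (Dop^[n+1] (Wr n a r)) z - z * _ = z ^ s
    rw [hiter, hlist, hfold', hstepA]
    unfold ser at hmain ⊢
    exact hmain
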